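/- Let E, F ⊆ ℝ^d be measurable with dist(E,F) = δ, and suppose T is an integral operator on L²(Ω), Ω ⊆ ℝ^d, with kernel k_t satisfying the Gaussian bound 0 ≤ k_t(x,y) ≤ C t^{−d/2} e^{−c|x−y|²/t} for a.e. x, y ∈ Ω. Then for every p ∈ [1,2] there exist constants C', c' > 0 such that for all h ∈ L²∩L^p supported in E ∩ Ω and all t > 0, ‖T h‖_{L²(F∩Ω)} ≤ C'·t^{(d/2 − d/p)/2}·e^{−c'δ²/t}·‖h‖_{L^p}. -/

import Mathlib

set_option maxHeartbeats 1000000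


open MeasureTheory Metric Set
open scoped ENNReal NNReal

/-- `L^p`–`L²` off-diagonal estimates: if `T` is an integral operator on `L²(Ω)` with
kernel `k_t` satisfying the Gaussian bound `0 ≤ k_t(x,y) ≤ C t^{−d/2} e^{−c|x−y|²/t}`
a.e., and `δ = dist(E,F)`, then for every `p ∈ [1,2]` there are `C', c' > 0` such that
for every `h ∈ L² ∩ L^p` supported in `E ∩ Ω` and every `t > 0`,
`‖T h‖_{L²(F∩Ω)} ≤ C' t^{(d/2 − d/p)/2} e^{−c'δ²/t} ‖h‖_{L^p}`. -/
lemma gauss_integrable {d : ℕ} {b : ℝ} (hb : 0 < b) :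
    Integrable (fun v : EuclideanSpace ℝ (Fin d) => Real.exp (-b * ‖v‖ ^ 2)) := by
  have h := (GaussianFourier.integrable_cexp_neg_mul_sq_norm_add
    (V := EuclideanSpace ℝ (Fin d)) (b := (b : ℂ)) (by simpa using hb) 0 0).re
  refine h.congr (Filter.Eventually.of_forall fun v => ?_)
  have : (-(b:ℂ) * (‖v‖:ℂ) ^ 2 + 0 * ((inner ℝ (0 : EuclideanSpace ℝ (Fin d)) v : ℝ) : ℂ))
      = ((-b * ‖v‖^2 : ℝ) : ℂ) := by push_cast; ring
  simp only [this, RCLike.re_to_complex, Complex.exp_ofReal_re]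

lemma gauss_lintegral_le {d : ℕ} {b : ℝ} (hb : 0 < b)
    (x : EuclideanSpace ℝ (Fin d)) (S : Set (EuclideanSpace ℝ (Fin d))) :
    ∫⁻ y in S, ENNReal.ofReal (Real.exp (-b * dist x y ^ 2)) ≤
      ENNReal.ofReal ((Real.pi / b) ^ ((d : ℝ) / 2)) := by
  calc ∫⁻ y in S, ENNReal.ofReal (Real.exp (-b * dist x y ^ 2))
      ≤ ∫⁻ y, ENNReal.ofReal (Real.exp (-b * dist x y ^ 2)) :=
        lintegral_mono' Measure.restrict_le_self le_rfl
    _ = ∫⁻ y, ENNReal.ofReal (Real.exp (-b * ‖x - y‖ ^ 2)) := by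
        simp_rw [dist_eq_norm]
    _ = ∫⁻ z, ENNReal.ofReal (Real.exp (-b * ‖z‖ ^ 2)) := by
        exact (Measure.measurePreserving_sub_left volume x).lintegral_comp
          (f := fun z => ENNReal.ofReal (Real.exp (-b * ‖z‖ ^ 2)))
          (Measurable.ennreal_ofReal (by fun_prop))
    _ = ENNReal.ofReal ((Real.pi / b) ^ ((d : ℝ) / 2)) := by
        rw [← ofReal_integral_eq_lintegral_ofReal (gauss_integrable hb)
          (Filter.Eventually.of_forall fun v => (Real.exp_pos _).le)]
        congr 1
        have := GaussianFourier.integral_rexp_neg_mul_sq_norm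
          (V := EuclideanSpace ℝ (Fin d)) hb
        rwa [finrank_euclideanSpace_fin] at this

theorem offdiagonal_estimate (d : ℕ) (hd : 0 < d)
    (Ω E F : Set (EuclideanSpace ℝ (Fin d)))
    (hΩ : MeasurableSet Ω) (hE : MeasurableSet E) (hF : MeasurableSet F)
    (δ : ℝ)
    (hδ : δ = sInf ((fun p : EuclideanSpace ℝ (Fin d) × EuclideanSpace ℝ (Fin d) =>
      dist p.1 p.2) '' (E ×ˢ F)))
    (k : ℝ → EuclideanSpace ℝ (Fin d) → EuclideanSpace ℝ (Fin d) → ℝ)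
    (hkmeas : ∀ t : ℝ, Measurable (Function.uncurry (k t)))
    (C c : ℝ) (hC : 0 < C) (hc : 0 < c)
    (hker : ∀ t : ℝ, 0 < t →
      ∀ᵐ q ∂((volume.restrict Ω).prod (volume.restrict Ω)),
        0 ≤ k t q.1 q.2 ∧
        k t q.1 q.2 ≤ C / t ^ ((d : ℝ) / 2) * Real.exp (-c * dist q.1 q.2 ^ 2 / t)) :
    ∀ p : ℝ, 1 ≤ p → p ≤ 2 →
      ∃ C' c' : ℝ, 0 < C' ∧ 0 < c' ∧
        ∀ h : EuclideanSpace ℝ (Fin d) → ℝ,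
          MemLp h 2 (volume.restrict Ω) → MemLp h (ENNReal.ofReal p) (volume.restrict Ω) →
          Function.support h ⊆ E ∩ Ω →
          ∀ t : ℝ, 0 < t →
            eLpNorm (fun x => ∫ y in Ω, k t x y * h y) 2 (volume.restrict (F ∩ Ω)) ≤
              ENNReal.ofReal
                  (C' * t ^ (((d : ℝ) / 2 - (d : ℝ) / p) / 2) * Real.exp (-c' * δ ^ 2 / t)) *
                eLpNorm h (ENNReal.ofReal p) (volume.restrict Ω) := by
  intro p hp1 hp2
  have hp0 : (0 : ℝ) < p := lt_of_lt_of_le one_pos hp1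
  -- the exponent s = 1/r with 1 + 1/2 = 1/p + 1/r
  set s : ℝ := 3 / 2 - 1 / p with hs_def
  have hp_inv1 : 1 / p ≤ 1 := by
    rw [div_le_one hp0]; exact hp1
  have hp_inv2 : 1 / 2 ≤ 1 / p := by
    apply div_le_div_of_nonneg_left one_pos.le hp0 hp2 |>.trans_eq rfl
  have h2p : (2:ℝ)⁻¹ ≤ p⁻¹ := by rw [← one_div, ← one_div]; exact hp_inv2
  have hs_half : 1 / 2 ≤ s := by simp only [hs_def]; linarith
  have hs_one : s ≤ 1 := by simp only [hs_def]; linarith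
  have hs0 : 0 < s := lt_of_lt_of_le one_half_pos hs_half
  set r : ℝ := s⁻¹ with hr_def
  have hr0 : 0 < r := inv_pos.mpr hs0
  have hrs : r * s = 1 := inv_mul_cancel₀ hs0.ne'
  have hr1 : 1 ≤ r := by
    rw [hr_def, le_inv_comm₀ one_pos hs0]; simpa using hs_one
  have hr2 : r ≤ 2 := by
    rw [hr_def, inv_le_comm₀ hs0 two_pos]; linarith
  refine ⟨C * (2 * Real.pi / (r * c)) ^ ((d : ℝ) / 2 * s), c / 2, by positivity,
    by positivity, ?_⟩
  intro h hh2 hhp hsupp t ht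
  set ν : Measure (EuclideanSpace ℝ (Fin d)) := volume.restrict Ω with hν
  set μF : Measure (EuclideanSpace ℝ (Fin d)) := volume.restrict (F ∩ Ω) with hμF
  have hμF_le : μF ≤ ν := Measure.restrict_mono inter_subset_right le_rfl
  have htd : (0:ℝ) < t ^ ((d : ℝ) / 2) := Real.rpow_pos_of_pos ht _
  set A : ℝ := C / t ^ ((d : ℝ) / 2) with hA_def
  have hA : 0 < A := div_pos hC htd
  set b : ℝ := c / (2 * t) with hb_def
  have hb : 0 < b := by positivity
  set g : EuclideanSpace ℝ (Fin d) → EuclideanSpace ℝ (Fin d) → ℝ≥0∞ := fun x y => ENNReal.ofReal (Real.exp (-b * dist x y ^ 2)) with hg_def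
  set K : ℝ≥0∞ := ENNReal.ofReal (A * Real.exp (-(c / 2) * δ ^ 2 / t)) with hK_def
  set N : ℝ≥0∞ := ∫⁻ y, (‖h y‖₊ : ℝ≥0∞) ^ p ∂ν with hN_def
  set Φ : EuclideanSpace ℝ (Fin d) → ℝ≥0∞ := fun x => ∫⁻ y, g x y ^ r * (‖h y‖₊ : ℝ≥0∞) ^ p ∂ν with hΦ_def
  set I : ℝ≥0∞ := ENNReal.ofReal ((Real.pi / (r * b)) ^ ((d : ℝ) / 2)) with hI_def
  have hδ0 : 0 ≤ δ := by
    rw [hδ]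
    apply Real.sInf_nonneg
    rintro z ⟨q, -, rfl⟩
    exact dist_nonneg
  have hδle : ∀ y ∈ E, ∀ x ∈ F, δ ≤ dist x y := by
    intro y hy x hx
    rw [hδ, dist_comm]
    exact csInf_le ⟨0, by rintro z ⟨q, -, rfl⟩; exact dist_nonneg⟩
      ⟨(y, x), ⟨hy, hx⟩, rfl⟩
  -- measurability of g
  have hg_meas : ∀ x, Measurable (g x) := fun x =>
    Measurable.ennreal_ofReal (by fun_prop)
  have hg_meas' : ∀ y, Measurable (fun x => g x y) := fun y =>
    Measurable.ennreal_ofReal (by fun_prop)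
  have hh_aemeas : AEMeasurable (fun y => (‖h y‖₊ : ℝ≥0∞)) ν := hhp.1.enorm
  -- the Gaussian integral bound
  have hgauss : ∀ (x : EuclideanSpace ℝ (Fin d)) (S : Set (EuclideanSpace ℝ (Fin d))), ∫⁻ y in S, g x y ^ r ≤ I := by
    intro x S
    have hpt : ∀ y : EuclideanSpace ℝ (Fin d), g x y ^ r
        = ENNReal.ofReal (Real.exp (-(r * b) * dist x y ^ 2)) := by
      intro y
      rw [hg_def]
      rw [ENNReal.ofReal_rpow_of_pos (Real.exp_pos _), ← Real.exp_mul]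
      ring_nf
    simp_rw [hpt]
    exact gauss_lintegral_le (by positivity) x S
  have hgauss' : ∀ y : EuclideanSpace ℝ (Fin d), ∫⁻ x, g x y ^ r ∂μF ≤ I := by
    intro y
    have hpt : ∀ x : EuclideanSpace ℝ (Fin d), g x y ^ r
        = ENNReal.ofReal (Real.exp (-(r * b) * dist y x ^ 2)) := by
      intro x
      rw [hg_def]
      simp only [dist_comm x y]
      rw [ENNReal.ofReal_rpow_of_pos (Real.exp_pos _), ← Real.exp_mul]
      ring_nf
    simp_rw [hpt]
    exact gauss_lintegral_le (by positivity) y (F ∩ Ω)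
  -- a.e. kernel bound, transferred
  have hker' : ∀ᵐ x ∂μF, ∀ᵐ y ∂ν,
      0 ≤ k t x y ∧ k t x y ≤ A * Real.exp (-c * dist x y ^ 2 / t) := by
    have h1 := Measure.ae_ae_of_ae_prod (hker t ht)
    exact (ae_mono hμF_le) h1
  have hxF : ∀ᵐ x ∂μF, x ∈ F ∩ Ω := ae_restrict_mem (hF.inter hΩ)
  -- main pointwise bound
  have key : ∀ᵐ x ∂μF, (‖∫ y in Ω, k t x y * h y‖₊ : ℝ≥0∞) ≤
      K * Φ x ^ (1/2 : ℝ) * I ^ (s - 1/2) * N ^ (1/p - 1/2) := by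
    filter_upwards [hker', hxF] with x hxk hxmem
    have step2 : ∀ᵐ y ∂ν, (‖k t x y * h y‖₊ : ℝ≥0∞) ≤ K * (g x y * (‖h y‖₊ : ℝ≥0∞)) := by
      filter_upwards [hxk] with y hky
      obtain ⟨hk0, hkb⟩ := hky
      by_cases hy : h y = 0
      · simp [hy]
      · have hyE : y ∈ E := (hsupp (Function.mem_support.mpr hy)).1
        have hdist : δ ≤ dist x y := hδle y hyE x hxmem.1
        have hd2 : δ ^ 2 ≤ dist x y ^ 2 := by nlinarith [dist_nonneg (x := x) (y := y)]
        have hexp : Real.exp (-c * dist x y ^ 2 / t) ≤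
            Real.exp (-(c / 2) * δ ^ 2 / t) * Real.exp (-b * dist x y ^ 2) := by
          rw [← Real.exp_add]
          apply Real.exp_le_exp.mpr
          have hti : (0:ℝ) ≤ t⁻¹ := by positivity
          have hbase : -c * dist x y ^ 2 ≤ -(c/2) * δ^2 + -(c/2) * dist x y ^ 2 := by
            nlinarith
          calc -c * dist x y ^ 2 / t = (-c * dist x y ^ 2) * t⁻¹ := by ring
            _ ≤ (-(c/2) * δ^2 + -(c/2) * dist x y ^ 2) * t⁻¹ :=
                mul_le_mul_of_nonneg_right hbase hti
            _ = -(c / 2) * δ ^ 2 / t + -b * dist x y ^ 2 := by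
                rw [hb_def]; field_simp
        have hreal : k t x y ≤ (A * Real.exp (-(c / 2) * δ ^ 2 / t)) *
            Real.exp (-b * dist x y ^ 2) := by
          calc k t x y ≤ A * Real.exp (-c * dist x y ^ 2 / t) := hkb
            _ ≤ A * (Real.exp (-(c / 2) * δ ^ 2 / t) * Real.exp (-b * dist x y ^ 2)) :=
                mul_le_mul_of_nonneg_left hexp hA.le
            _ = _ := by ring
        calc (‖k t x y * h y‖₊ : ℝ≥0∞) = (‖k t x y‖₊ : ℝ≥0∞) * (‖h y‖₊ : ℝ≥0∞) := by
              rw [nnnorm_mul]; push_cast; ring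
          _ ≤ (K * g x y) * (‖h y‖₊ : ℝ≥0∞) := by
              apply mul_le_mul_left
              rw [← enorm_eq_nnnorm, Real.enorm_eq_ofReal hk0, hK_def, hg_def, ← ENNReal.ofReal_mul
                (by positivity)]
              exact ENNReal.ofReal_le_ofReal hreal
          _ = K * (g x y * (‖h y‖₊ : ℝ≥0∞)) := by ring
    have hold : ∫⁻ y, g x y * (‖h y‖₊ : ℝ≥0∞) ∂ν ≤
        Φ x ^ (1/2 : ℝ) * (∫⁻ y, g x y ^ r ∂ν) ^ (s - 1/2) * N ^ (1/p - 1/2) := by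
      have H := ENNReal.lintegral_prod_norm_pow_le (μ := ν)
        (Finset.univ : Finset (Fin 3))
        (f := ![fun y => g x y ^ r * (‖h y‖₊ : ℝ≥0∞) ^ p, fun y => g x y ^ r,
          fun y => (‖h y‖₊ : ℝ≥0∞) ^ p])
        (p := ![1/2, s - 1/2, 1/p - 1/2]) ?_ ?_ ?_
      · simp only [Fin.prod_univ_three, Matrix.cons_val_zero, Matrix.cons_val_one,
          Matrix.head_cons, Matrix.cons_val_two, Matrix.tail_cons] at H
        simp only [hΦ_def, hN_def]
        refine le_trans (le_of_eq (lintegral_congr fun y => ?_)) H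
        rw [ENNReal.mul_rpow_of_nonneg _ _ (by norm_num : (0:ℝ) ≤ 1/2)]
        rw [← ENNReal.rpow_mul, ← ENNReal.rpow_mul, ← ENNReal.rpow_mul,
          ← ENNReal.rpow_mul]
        calc g x y * (‖h y‖₊ : ℝ≥0∞) = (g x y ^ (r * (1/2)) * g x y ^ (r * (s - 1/2))) *
              ((‖h y‖₊ : ℝ≥0∞) ^ (p * (1/2)) * (‖h y‖₊ : ℝ≥0∞) ^ (p * (1/p - 1/2))) := by
              rw [← ENNReal.rpow_add_of_nonneg _ _ (by positivity) (by nlinarith),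
                ← ENNReal.rpow_add_of_nonneg _ _ (by positivity) (by nlinarith)]
              have e1 : r * (1/2) + r * (s - 1/2) = r * s := by ring
              have e2 : p * (1/2) + p * (1/p - 1/2) = p * (1/p) := by ring
              rw [e1, e2, hrs, mul_one_div_cancel hp0.ne', ENNReal.rpow_one,
                ENNReal.rpow_one]
          _ = _ := by ring
      · intro i _
        fin_cases i
        · simpa [Pi.mul_def] using ((hg_meas x).pow_const r).aemeasurable.mul (hh_aemeas.pow_const p)
        · simpa using ((hg_meas x).pow_const r).aemeasurable
        · simpa using hh_aemeas.pow_const p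
      · rw [Fin.sum_univ_three]
        simp only [Matrix.cons_val_zero, Matrix.cons_val_one, Matrix.head_cons,
          Matrix.cons_val_two, Matrix.tail_cons]
        rw [hs_def]; field_simp; ring
      · intro i _
        fin_cases i <;> simp <;> linarith
    calc (‖∫ y in Ω, k t x y * h y‖₊ : ℝ≥0∞)
        ≤ ∫⁻ y, (‖k t x y * h y‖₊ : ℝ≥0∞) ∂ν := enorm_integral_le_lintegral_enorm _
      _ ≤ ∫⁻ y, K * (g x y * (‖h y‖₊ : ℝ≥0∞)) ∂ν := lintegral_mono_ae step2
      _ = K * ∫⁻ y, g x y * (‖h y‖₊ : ℝ≥0∞) ∂ν :=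
          lintegral_const_mul' _ _ ENNReal.ofReal_ne_top
      _ ≤ K * (Φ x ^ (1/2 : ℝ) * (∫⁻ y, g x y ^ r ∂ν) ^ (s - 1/2) * N ^ (1/p - 1/2)) :=
          mul_le_mul_right hold _
      _ ≤ K * (Φ x ^ (1/2 : ℝ) * I ^ (s - 1/2) * N ^ (1/p - 1/2)) := by
          apply mul_le_mul_right
          apply mul_le_mul_left
          apply mul_le_mul_right
          exact ENNReal.rpow_le_rpow (hgauss x Ω) (by linarith)
      _ = K * Φ x ^ (1/2 : ℝ) * I ^ (s - 1/2) * N ^ (1/p - 1/2) := by ring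
  -- basic finiteness facts
  have hofp0 : (ENNReal.ofReal p) ≠ 0 := by
    simp only [ne_eq, ENNReal.ofReal_eq_zero, not_le]; linarith
  have heLp : eLpNorm h (ENNReal.ofReal p) ν = N ^ (1/p : ℝ) := by
    rw [eLpNorm_eq_lintegral_rpow_enorm_toReal hofp0 ENNReal.ofReal_ne_top,
      ENNReal.toReal_ofReal hp0.le]
    rfl
  have hN_ne : N ≠ ⊤ := by
    intro hN
    have h2 := hhp.2
    rw [heLp, hN, ENNReal.top_rpow_of_pos (by positivity : (0:ℝ) < 1/p)] at h2
    exact (lt_irrefl _ h2).elim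
  set M : ℝ≥0∞ := K * I ^ (s - 1/2) * N ^ (1/p - 1/2) with hM_def
  have hM_ne : M ≠ ⊤ := by
    refine ENNReal.mul_ne_top (ENNReal.mul_ne_top ENNReal.ofReal_ne_top ?_) ?_
    · exact ENNReal.rpow_ne_top_of_nonneg (by linarith) ENNReal.ofReal_ne_top
    · exact ENNReal.rpow_ne_top_of_nonneg (by linarith) hN_ne
  -- integrate the square
  have stepA : ∫⁻ x, (‖∫ y in Ω, k t x y * h y‖₊ : ℝ≥0∞) ^ (2:ℝ) ∂μF ≤
      M ^ (2:ℝ) * ∫⁻ x, Φ x ∂μF := by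
    rw [← lintegral_const_mul' _ _ (ENNReal.rpow_ne_top_of_nonneg (by norm_num) hM_ne)]
    apply lintegral_mono_ae
    filter_upwards [key] with x hx
    calc (‖∫ y in Ω, k t x y * h y‖₊ : ℝ≥0∞) ^ (2:ℝ)
        ≤ (K * Φ x ^ (1/2 : ℝ) * I ^ (s - 1/2) * N ^ (1/p - 1/2)) ^ (2:ℝ) :=
          ENNReal.rpow_le_rpow hx (by norm_num)
      _ = (M * Φ x ^ (1/2 : ℝ)) ^ (2:ℝ) := by rw [hM_def]; ring_nf
      _ = M ^ (2:ℝ) * Φ x := by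
          rw [ENNReal.mul_rpow_of_nonneg _ _ (by norm_num : (0:ℝ) ≤ 2),
            ← ENNReal.rpow_mul]
          norm_num
  -- the double integral
  have stepB : ∫⁻ x, Φ x ∂μF ≤ I * N := by
    have ham : AEMeasurable h ν := hhp.1.aemeasurable
    set h₀ : EuclideanSpace ℝ (Fin d) → ℝ := ham.mk h with hh₀_def
    have h₀meas : Measurable h₀ := ham.measurable_mk
    have heq : h =ᵐ[ν] h₀ := ham.ae_eq_mk
    have hΦeq : ∀ x, Φ x = ∫⁻ y, g x y ^ r * (‖h₀ y‖₊ : ℝ≥0∞) ^ p ∂ν := by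
      intro x
      rw [hΦ_def]
      refine lintegral_congr_ae ?_
      filter_upwards [heq] with y hy
      rw [hy]
    have hNeq : N = ∫⁻ y, (‖h₀ y‖₊ : ℝ≥0∞) ^ p ∂ν := by
      rw [hN_def]
      refine lintegral_congr_ae ?_
      filter_upwards [heq] with y hy
      rw [hy]
    calc ∫⁻ x, Φ x ∂μF
        = ∫⁻ x, ∫⁻ y, g x y ^ r * (‖h₀ y‖₊ : ℝ≥0∞) ^ p ∂ν ∂μF :=
          lintegral_congr fun x => hΦeq x
      _ = ∫⁻ y, ∫⁻ x, g x y ^ r * (‖h₀ y‖₊ : ℝ≥0∞) ^ p ∂μF ∂ν := by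
          apply lintegral_lintegral_swap
          have hG : Measurable (fun z : EuclideanSpace ℝ (Fin d) × EuclideanSpace ℝ (Fin d)
              => g z.1 z.2) := Measurable.ennreal_ofReal (by fun_prop)
          exact ((hG.pow_const r).mul
            ((h₀meas.enorm.comp measurable_snd).pow_const p)).aemeasurable
      _ = ∫⁻ y, (∫⁻ x, g x y ^ r ∂μF) * (‖h₀ y‖₊ : ℝ≥0∞) ^ p ∂ν := by
          apply lintegral_congr fun y => ?_
          exact lintegral_mul_const' _ _
            (ENNReal.rpow_ne_top_of_nonneg hp0.le ENNReal.coe_ne_top)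
      _ ≤ ∫⁻ y, I * (‖h₀ y‖₊ : ℝ≥0∞) ^ p ∂ν :=
          lintegral_mono fun y => mul_le_mul_left (hgauss' y) _
      _ = I * ∫⁻ y, (‖h₀ y‖₊ : ℝ≥0∞) ^ p ∂ν :=
          lintegral_const_mul' _ _ ENNReal.ofReal_ne_top
      _ = I * N := by rw [hNeq]
  -- put everything together
  have hfinal : eLpNorm (fun x => ∫ y in Ω, k t x y * h y) 2 μF ≤ K * I ^ s * N ^ (1/p : ℝ) := by
    rw [eLpNorm_eq_lintegral_rpow_enorm_toReal (by norm_num) (by norm_num)]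
    have h2 : ((2 : ℝ≥0∞)).toReal = (2:ℝ) := by norm_num
    rw [h2]
    calc (∫⁻ x, (‖∫ y in Ω, k t x y * h y‖₊ : ℝ≥0∞) ^ (2:ℝ) ∂μF) ^ (1/(2:ℝ))
        ≤ (M ^ (2:ℝ) * (I * N)) ^ (1/(2:ℝ)) := by
          apply ENNReal.rpow_le_rpow _ (by norm_num)
          exact le_trans stepA (mul_le_mul_right stepB _)
      _ = M * (I ^ (1/2:ℝ) * N ^ (1/2:ℝ)) := by
          rw [ENNReal.mul_rpow_of_nonneg _ _ (by norm_num : (0:ℝ) ≤ 1/2),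
            ← ENNReal.rpow_mul, ENNReal.mul_rpow_of_nonneg I N
              (by norm_num : (0:ℝ) ≤ 1/2)]
          norm_num
      _ = K * (I ^ (s - 1/2) * I ^ (1/2:ℝ)) * (N ^ (1/p - 1/2) * N ^ (1/2:ℝ)) := by
          rw [hM_def]; ring
      _ = K * I ^ s * N ^ (1/p : ℝ) := by
          rw [← ENNReal.rpow_add_of_nonneg _ _ (by linarith) (by norm_num),
            ← ENNReal.rpow_add_of_nonneg _ _ (by linarith) (by norm_num)]
          norm_num
  refine hfinal.trans (le_of_eq ?_)
  rw [heLp]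
  congr 1
  -- K * I ^ s = ofReal (C' * t ^ e * exp (-c' δ² / t))
  have hIs : I ^ s = ENNReal.ofReal ((Real.pi / (r * b)) ^ ((d:ℝ)/2 * s)) := by
    rw [hI_def, ENNReal.ofReal_rpow_of_pos (by positivity), ← Real.rpow_mul (by positivity)]
  rw [hK_def, hIs, ← ENNReal.ofReal_mul (by positivity)]
  congr 1
  have hπrb : Real.pi / (r * b) = (2 * Real.pi / (r * c)) * t := by
    rw [hb_def]; field_simp
  have hsplit : (Real.pi / (r * b)) ^ ((d:ℝ)/2 * s)
      = (2 * Real.pi / (r * c)) ^ ((d:ℝ)/2 * s) * t ^ ((d:ℝ)/2 * s) := by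
    rw [hπrb, Real.mul_rpow (by positivity) ht.le]
  have hexpo : ((d : ℝ) / 2 - (d : ℝ) / p) / 2 = (d:ℝ)/2 * s - (d:ℝ)/2 := by
    rw [hs_def]; field_simp; ring
  rw [hA_def, hsplit, hexpo, Real.rpow_sub ht]
  field_simp
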